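/- Let R be a commutative ring with unity, G = ⟨x | x^n = 1⟩ a cyclic group of order n, and σ, τ the R-algebra endomorphisms of RG with σ(x) = x^u and τ(x) = x^{u+v}, where u, v ∈ {0, 1, …, n−1} and v ≠ 0. Let D : RG → RG be a (σ,τ)-derivation, write D(x) = Σ_{i=0}^{n−1} c_i x^i with c_i ∈ R, and set d = gcd(v,n) and m = n/d. Then D is inner if and only if the following d equations hold simultaneously: Σ_{j=0}^{m−1} c_{i+jd} = 0 for every i ∈ {0, 1, …, d−1}. -/

import Mathlib

noncomputable def xgen (R : Type*) [CommRing R] (n : ℕ) :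
    MonoidAlgebra R (Multiplicative (ZMod n)) :=
  MonoidAlgebra.of R (Multiplicative (ZMod n)) (Multiplicative.ofAdd (1 : ZMod n))

lemma xpow {R : Type*} [CommRing R] (n k : ℕ) :
    xgen R n ^ k = MonoidAlgebra.single (Multiplicative.ofAdd ((k : ZMod n))) 1 := by
  rw [xgen, ← map_pow, MonoidAlgebra.of_apply]
  congr 1
  rw [← ofAdd_nsmul]
  simp [nsmul_eq_mul]

noncomputable def phi (R : Type*) [CommRing R] (n : ℕ) [NeZero n] (d i : ℕ) :
    MonoidAlgebra R (Multiplicative (ZMod n)) →ₗ[R] R where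
  toFun a := ∑ g : ZMod n, if g.val % d = i then a.coeff (Multiplicative.ofAdd g) else 0
  map_add' a b := by
    rw [← Finset.sum_add_distrib]
    refine Finset.sum_congr rfl fun g _ => ?_
    split <;> first | rfl | simp
  map_smul' r a := by
    rw [RingHom.id_apply, Finset.smul_sum]
    refine Finset.sum_congr rfl fun g _ => ?_
    split <;> first | rfl | simp

lemma phi_shift {R : Type*} [CommRing R] (n : ℕ) [NeZero n] (d i v : ℕ)
    (hdn : d ∣ n) (hdv : d ∣ v) (hvn : v < n)
    (a : MonoidAlgebra R (Multiplicative (ZMod n))) :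
    phi R n d i (xgen R n ^ v * a) = phi R n d i a := by
  have key : ∀ g : ZMod n, (xgen R n ^ v * a).coeff (Multiplicative.ofAdd g)
      = a.coeff (Multiplicative.ofAdd (g - (v : ZMod n))) := by
    intro g
    rw [xpow, MonoidAlgebra.single_mul_apply, one_mul]
    congr 1
    rw [← ofAdd_neg, ← ofAdd_add]
    congr 1
    ring
  simp only [phi, LinearMap.coe_mk, AddHom.coe_mk, key]
  rw [← Equiv.sum_comp (Equiv.addRight ((v : ZMod n))) ]
  refine Finset.sum_congr rfl fun g _ => ?_
  have h1 : ((Equiv.addRight ((v:ZMod n))) g) - (v : ZMod n) = g := by simp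
  have h2 : ((Equiv.addRight ((v:ZMod n))) g).val % d = g.val % d := by
    simp only [Equiv.coe_addRight]
    rw [ZMod.val_add, Nat.mod_mod_of_dvd _ hdn, Nat.add_mod, ZMod.val_natCast,
      Nat.mod_eq_of_lt hvn, Nat.mod_eq_zero_of_dvd hdv]
    simp [Nat.mod_mod]
  rw [h1, h2]

lemma phi_xpow {R : Type*} [CommRing R] (n : ℕ) [NeZero n] (d i k : ℕ) (hdn : d ∣ n) :
    phi R n d i (xgen R n ^ k) = if k % d = i then 1 else 0 := by
  simp only [phi, LinearMap.coe_mk, AddHom.coe_mk, xpow]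
  rw [Finset.sum_eq_single ((k : ℕ) : ZMod n)]
  · have : ((k:ℕ):ZMod n).val % d = k % d := by
      rw [ZMod.val_natCast, Nat.mod_mod_of_dvd _ hdn]
    rw [this]
    split <;> simp [MonoidAlgebra.single_apply]
  · intro g _ hg
    have : (Finsupp.single (Multiplicative.ofAdd ((k:ZMod n))) (1:R)) (Multiplicative.ofAdd g) = 0 := by
      rw [Finsupp.single_apply, if_neg]
      intro h
      exact hg (by simpa using h.symm)
    simp [this]
  · simp

lemma fiber_sum {R : Type*} [CommRing R] (n d : ℕ) [NeZero n] (hdn : d ∣ n) (hd0 : 0 < d)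
    (c : ZMod n → R) (i : ℕ) (hi : i < d) :
    ∑ k ∈ Finset.univ.filter (fun k : ZMod n => k.val % d = i), c k
      = ∑ j ∈ Finset.range (n / d), c ((i + j * d : ℕ) : ZMod n) := by
  have hn0 : 0 < n := Nat.pos_of_ne_zero (NeZero.ne n)
  have key : ∀ k : ZMod n, k.val % d = i → ((i + k.val / d * d : ℕ) : ZMod n) = k := by
    intro k hk
    have : i + k.val / d * d = k.val := by
      rw [← hk, Nat.add_comm]
      exact Nat.div_add_mod' k.val d
    rw [this]
    exact ZMod.natCast_rightInverse k
  have hval : ∀ j < n / d, ((i + j * d : ℕ) : ZMod n).val = i + j * d := by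
    intro j hj
    refine ZMod.val_cast_of_lt ?_
    calc i + j * d < d + j * d := by omega
      _ = (j + 1) * d := by ring
      _ ≤ (n / d) * d := Nat.mul_le_mul_right d hj
      _ = n := Nat.div_mul_cancel hdn
  refine Finset.sum_bij' (fun k _ => k.val / d) (fun j _ => ((i + j * d : ℕ) : ZMod n))
    ?_ ?_ ?_ ?_ ?_
  · intro k hk
    exact Finset.mem_range.mpr (Nat.div_lt_div_of_lt_of_dvd hdn (ZMod.val_lt k))
  · intro j hj
    have hj' := Finset.mem_range.mp hj
    simp only [Finset.mem_filter, Finset.mem_univ, true_and, hval j hj']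
    rw [Nat.add_mul_mod_self_right, Nat.mod_eq_of_lt hi]
  · intro k hk
    exact key k (Finset.mem_filter.mp hk).2
  · intro j hj
    have hj' := Finset.mem_range.mp hj
    rw [hval j hj', Nat.add_mul_div_right _ _ hd0, Nat.div_eq_of_lt hi, zero_add]
  · intro k hk
    rw [key k (Finset.mem_filter.mp hk).2]

lemma exists_mul_cong {n : ℕ} [NeZero n] (v : ℕ) :
    ∃ a : ℕ, ((a * v : ℕ) : ZMod n) = ((Nat.gcd v n : ℕ) : ZMod n) := by
  refine ⟨((Nat.gcdA v n : ZMod n)).val, ?_⟩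
  have h : (Nat.gcd v n : ℤ) = v * Nat.gcdA v n + n * Nat.gcdB v n := Nat.gcd_eq_gcd_ab v n
  have h2 : ((Nat.gcd v n : ℤ) : ZMod n) = ((v : ℤ) * Nat.gcdA v n : ℤ) := by
    rw [h]
    push_cast
    simp [ZMod.natCast_self]
  have h3 : (((Nat.gcdA v n : ZMod n)).val : ZMod n) = ((Nat.gcdA v n : ℤ) : ZMod n) :=
    ZMod.natCast_rightInverse _
  push_cast
  push_cast at h2
  rw [h3, h2]
  ring

lemma inner_of_gen {R : Type*} [CommRing R] (n : ℕ) [NeZero n]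
    (σ τ : MonoidAlgebra R (Multiplicative (ZMod n)) →ₐ[R] MonoidAlgebra R (Multiplicative (ZMod n)))
    (D : MonoidAlgebra R (Multiplicative (ZMod n)) →ₗ[R] MonoidAlgebra R (Multiplicative (ZMod n)))
    (hD : ∀ a b, D (a * b) = D a * τ b + σ a * D b)
    (β : MonoidAlgebra R (Multiplicative (ZMod n)))
    (hx : D (xgen R n) = β * (τ (xgen R n) - σ (xgen R n))) :
    ∀ a, D a = β * (τ a - σ a) := by
  have h1 : D 1 = 0 := by
    have := hD 1 1
    simp only [one_mul, mul_one, map_one] at this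
    exact (left_eq_add.mp this)
  have hpow : ∀ k : ℕ, D (xgen R n ^ k) = β * (τ (xgen R n ^ k) - σ (xgen R n ^ k)) := by
    intro k
    induction k with
    | zero => simp [h1]
    | succ k ih =>
      rw [pow_succ, hD, ih, hx, map_mul, map_mul]
      ring
  have hsingle : ∀ (g : Multiplicative (ZMod n)) (b : R),
      MonoidAlgebra.single g b = b • xgen R n ^ (Multiplicative.toAdd g).val := by
    intro g b
    rw [xpow]
    have : ((((Multiplicative.toAdd g).val : ℕ)) : ZMod n) = Multiplicative.toAdd g :=
      ZMod.natCast_rightInverse _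
    rw [this]
    simp [Finsupp.smul_single]
  intro a
  induction a using MonoidAlgebra.induction_linear with
  | zero => simp
  | add f g hf hg =>
    rw [map_add, map_add, map_add, hf, hg]
    ring
  | single g b =>
    rw [hsingle g b, map_smul, map_smul, map_smul, hpow, ← smul_sub, mul_smul_comm]

theorem stmt9 {R : Type*} [CommRing R] (n u v : ℕ) [NeZero n]
    (hu : u < n) (hv : v < n) (hv0 : v ≠ 0)
    (σ τ : MonoidAlgebra R (Multiplicative (ZMod n)) →ₐ[R] MonoidAlgebra R (Multiplicative (ZMod n)))
    (hσ : σ (xgen R n) = xgen R n ^ u) (hτ : τ (xgen R n) = xgen R n ^ (u + v))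
    (D : MonoidAlgebra R (Multiplicative (ZMod n)) →ₗ[R] MonoidAlgebra R (Multiplicative (ZMod n)))
    (hD : ∀ a b, D (a * b) = D a * τ b + σ a * D b)
    (c : ZMod n → R) (hc : D (xgen R n) = ∑ i : ZMod n, c i • xgen R n ^ i.val) :
    (∃ β, ∀ a, D a = β * (τ a - σ a)) ↔
    ∀ i : ℕ, i < Nat.gcd v n →
      ∑ j ∈ Finset.range (n / Nat.gcd v n), c ((i + j * Nat.gcd v n : ℕ) : ZMod n) = 0 := by
  have hn0 : 0 < n := Nat.pos_of_ne_zero (NeZero.ne n)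
  set d := Nat.gcd v n with hd
  have hd0 : 0 < d := Nat.gcd_pos_of_pos_left _ (Nat.pos_of_ne_zero hv0)
  have hdn : d ∣ n := Nat.gcd_dvd_right v n
  have hdv : d ∣ v := Nat.gcd_dvd_left v n
  constructor
  · rintro ⟨β, hβ⟩ i hi
    have hDx : D (xgen R n) = xgen R n ^ v * (β * xgen R n ^ u) - β * xgen R n ^ u := by
      rw [hβ, hσ, hτ, pow_add]
      ring
    have h0 : phi R n d i (D (xgen R n)) = 0 := by
      rw [hDx, map_sub, phi_shift n d i v hdn hdv hv, sub_self]
    rw [hc, map_sum] at h0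
    simp only [map_smul, phi_xpow n d i _ hdn, smul_eq_mul, mul_ite, mul_one, mul_zero] at h0
    rw [← Finset.sum_filter] at h0
    rw [← fiber_sum n d hdn hd0 c i hi]
    exact h0
  · intro H
    have hsum0 : ∀ i : ℕ, i < d →
        ∑ k ∈ Finset.univ.filter (fun k : ZMod n => k.val % d = i), c k = 0 := by
      intro i hi
      rw [fiber_sum n d hdn hd0 c i hi]
      exact H i hi
    obtain ⟨a, ha⟩ := exists_mul_cong (n := n) v
    have hxd : xgen R n ^ d = (xgen R n ^ v) ^ a := by
      rw [← pow_mul, xpow, xpow]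
      have : ((d : ℕ) : ZMod n) = ((v * a : ℕ) : ZMod n) := by
        rw [← ha]
        push_cast
        ring
      rw [this]
    set I := Ideal.span {xgen R n ^ v - 1} with hI
    have hmemv : xgen R n ^ v - 1 ∈ I := Ideal.subset_span (Set.mem_singleton _)
    have hxd1 : xgen R n ^ d - 1 ∈ I := by
      rw [hxd, ← geom_sum_mul]
      exact Ideal.mul_mem_left _ _ hmemv
    have hterm : ∀ k : ZMod n, xgen R n ^ k.val - xgen R n ^ (k.val % d) ∈ I := by
      intro k
      have hk : xgen R n ^ k.val = xgen R n ^ (k.val % d) * (xgen R n ^ d) ^ (k.val / d) := by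
        rw [← pow_mul, ← pow_add, Nat.mod_add_div]
      rw [hk]
      have heq : xgen R n ^ (k.val % d) * (xgen R n ^ d) ^ (k.val / d) - xgen R n ^ (k.val % d)
          = xgen R n ^ (k.val % d) * ((xgen R n ^ d) ^ (k.val / d) - 1) := by ring
      rw [heq, ← geom_sum_mul]
      exact Ideal.mul_mem_left _ _ (Ideal.mul_mem_left _ _ hxd1)
    have hmem : D (xgen R n) ∈ I := by
      rw [hc]
      have hsplit : ∀ k : ZMod n, c k • xgen R n ^ k.val
          = c k • (xgen R n ^ k.val - xgen R n ^ (k.val % d)) + c k • xgen R n ^ (k.val % d) := by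
        intro k
        rw [smul_sub]
        ring
      rw [Finset.sum_congr rfl (fun k _ => hsplit k), Finset.sum_add_distrib]
      have second : ∑ k : ZMod n, c k • xgen R n ^ (k.val % d) = 0 := by
        rw [← Finset.sum_fiberwise_of_maps_to (g := fun k : ZMod n => k.val % d)
          (t := Finset.range d) (fun k _ => Finset.mem_range.mpr (Nat.mod_lt _ hd0))]
        refine Finset.sum_eq_zero fun i hi => ?_
        have hi' := Finset.mem_range.mp hi
        have hcongr : ∀ k ∈ Finset.univ.filter (fun k : ZMod n => k.val % d = i),
            c k • xgen R n ^ (k.val % d) = c k • xgen R n ^ i := by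
          intro k hk
          rw [(Finset.mem_filter.mp hk).2]
        rw [Finset.sum_congr rfl hcongr, ← Finset.sum_smul, hsum0 i hi', zero_smul]
      rw [second, add_zero]
      exact Ideal.sum_mem _ fun k _ => Submodule.smul_of_tower_mem _ _ (hterm k)
    obtain ⟨γ, hγ⟩ := Ideal.mem_span_singleton'.mp hmem
    have hxn : xgen R n ^ n = 1 := by
      rw [xpow, ZMod.natCast_self]
      rfl
    refine ⟨γ * xgen R n ^ (n - u), inner_of_gen n σ τ D hD _ ?_⟩
    rw [hσ, hτ]
    have heq : γ * xgen R n ^ (n - u) * (xgen R n ^ (u + v) - xgen R n ^ u)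
        = γ * (xgen R n ^ ((n - u) + u)) * (xgen R n ^ v - 1) := by
      rw [pow_add, pow_add]
      ring
    rw [heq, Nat.sub_add_cancel hu.le, hxn, mul_one, hγ]
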